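/- Let Q ⊆ V be nonempty with V∖Q nonempty, let μ > λ_max(A_{V∖Q}), the largest eigenvalue of the principal submatrix of A indexed by the elements of V∖Q, and let Γ̂_Q be the n×n diagonal matrix whose diagonal entries are 0 at indices in Q and 1 at indices in V∖Q. If X is a local maximizer of f_Q^μ(X) = Xᵀ(A − μ Γ̂_Q)X on Δ, then δ(X) ∩ Q ≠ ∅, where δ(X) = {i ∈ V : X_i > 0}. -/

import Mathlib

open Matrix BigOperators

lemma rayleigh_le {m : Type*} [Fintype m] [DecidableEq m] [Nonempty m]
    (B : Matrix m m ℝ) (hB : B.IsHermitian) (x : m → ℝ) :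
    x ⬝ᵥ B *ᵥ x ≤ (⨆ j, hB.eigenvalues j) * (x ⬝ᵥ x) := by
  have hspec := hB.spectral_theorem
  set U : Matrix m m ℝ := (hB.eigenvectorUnitary : Matrix m m ℝ) with hU
  have hUU : U * Uᵀ = 1 := by
    have := (Matrix.mem_unitaryGroup_iff).mp hB.eigenvectorUnitary.2
    simpa [Matrix.star_eq_conjTranspose, conjTranspose_eq_transpose_of_trivial] using this
  have hxy : x ⬝ᵥ x = (x ᵥ* U) ⬝ᵥ (x ᵥ* U) := by
    rw [← Matrix.mulVec_transpose, dotProduct_mulVec, vecMul_transpose, mulVec_mulVec,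
      hUU, one_mulVec]
  have hquad : x ⬝ᵥ B *ᵥ x = ∑ i, hB.eigenvalues i * ((x ᵥ* U) i)^2 := by
    conv_lhs => rw [hspec, Unitary.conjStarAlgAut_apply]
    rw [← mulVec_mulVec, ← mulVec_mulVec, dotProduct_mulVec,
      Matrix.star_eq_conjTranspose, conjTranspose_eq_transpose_of_trivial,
      Matrix.mulVec_transpose, dotProduct_mulVec (x ᵥ* U)]
    rw [show (x ᵥ* U) ᵥ* diagonal (RCLike.ofReal ∘ hB.eigenvalues)
        = fun i => hB.eigenvalues i * (x ᵥ* U) i from ?_]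
    · simp only [dotProduct]
      apply Finset.sum_congr rfl; intro i _; ring
    · funext i
      simp [vecMul_diagonal]
      ring
  rw [hquad, hxy]
  simp only [dotProduct]
  rw [Finset.mul_sum]
  apply Finset.sum_le_sum
  intro i _
  have h1 : hB.eigenvalues i ≤ ⨆ j, hB.eigenvalues j :=
    le_ciSup (Set.Finite.bddAbove (Set.finite_range _)) i
  calc hB.eigenvalues i * ((x ᵥ* U) i)^2 ≤ (⨆ j, hB.eigenvalues j) * ((x ᵥ* U) i)^2 :=
        mul_le_mul_of_nonneg_right h1 (sq_nonneg _)
    _ = (⨆ j, hB.eigenvalues j) * ((x ᵥ* U) i * (x ᵥ* U) i) := by ring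

lemma quad_expand {n : ℕ} (M : Matrix (Fin n) (Fin n) ℝ) (a b : Fin n → ℝ) (s u : ℝ) :
    (s • a + u • b) ⬝ᵥ M *ᵥ (s • a + u • b)
      = s^2 * (a ⬝ᵥ M *ᵥ a) + s*u*(a ⬝ᵥ M *ᵥ b) + s*u*(b ⬝ᵥ M *ᵥ a) + u^2 * (b ⬝ᵥ M *ᵥ b) := by
  rw [Matrix.mulVec_add, Matrix.mulVec_smul, Matrix.mulVec_smul, add_dotProduct,
    smul_dotProduct, smul_dotProduct, dotProduct_add, dotProduct_add,
    dotProduct_smul, dotProduct_smul, dotProduct_smul, dotProduct_smul]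
  simp only [smul_eq_mul]
  ring

/-- Constrained dominant sets for retrieval: if `μ > λ_max(A_{V∖Q})`, the largest
eigenvalue of the principal submatrix of `A` indexed by `V∖Q`, and `X` is a local
maximizer of `f_Q^μ(X) = Xᵀ(A − μ Γ̂_Q)X` on the standard simplex Δ, where `Γ̂_Q` is
the diagonal matrix with entries 0 on `Q` and 1 on `V∖Q`, then `δ(X) ∩ Q ≠ ∅`. -/
theorem stmt_12 {n : ℕ} (A : Matrix (Fin n) (Fin n) ℝ) (hA : A.IsSymm)
    (hApos : ∀ i j, 0 ≤ A i j)
    (Q : Finset (Fin n)) (hQ : Q.Nonempty) (hQc : Qᶜ.Nonempty)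
    (B : Matrix {i : Fin n // i ∈ Qᶜ} {i : Fin n // i ∈ Qᶜ} ℝ)
    (hB : B = A.submatrix Subtype.val Subtype.val)
    (hherm : B.IsHermitian)
    (μ : ℝ) (hμ : (⨆ j, hherm.eigenvalues j) < μ)
    (X : Fin n → ℝ)
    (hX : X ∈ {y : Fin n → ℝ | ∑ i, y i = 1 ∧ ∀ i, 0 ≤ y i})
    (hmax : IsLocalMaxOn
      (fun y : Fin n → ℝ =>
        y ⬝ᵥ (A - μ • Matrix.diagonal fun i => if i ∈ Q then (0 : ℝ) else 1).mulVec y)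
      {y : Fin n → ℝ | ∑ i, y i = 1 ∧ ∀ i, 0 ≤ y i} X) :
    ∃ i ∈ Q, 0 < X i := by
  classical
  by_contra hcon
  push_neg at hcon
  obtain ⟨hsum, hnn⟩ := hX
  have hXQ : ∀ i ∈ Q, X i = 0 := fun i hi => le_antisymm (hcon i hi) (hnn i)
  haveI : Nonempty {i : Fin n // i ∈ Qᶜ} := ⟨⟨hQc.choose, hQc.choose_spec⟩⟩
  set g : Fin n → ℝ := fun i => if i ∈ Q then (0 : ℝ) else 1 with hg
  set M : Matrix (Fin n) (Fin n) ℝ := A - μ • Matrix.diagonal g with hM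
  set f : (Fin n → ℝ) → ℝ := fun y => y ⬝ᵥ M *ᵥ y with hf
  set s : Set (Fin n → ℝ) := {y : Fin n → ℝ | ∑ i, y i = 1 ∧ ∀ i, 0 ≤ y i} with hs
  -- X restricted to Qᶜ
  set x' : {i : Fin n // i ∈ Qᶜ} → ℝ := fun i => X i.val with hx'
  -- step 1: f X < 0
  have hAq : X ⬝ᵥ A *ᵥ X = x' ⬝ᵥ B *ᵥ x' := by
    simp only [dotProduct, mulVec, hB, submatrix_apply, hx']
    have inner : ∀ i : Fin n, (∑ j : {k : Fin n // k ∈ Qᶜ}, A i j.val * X j.val)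
        = ∑ j, A i j * X j := by
      intro i
      rw [Finset.sum_coe_sort Qᶜ (fun j => A i j * X j)]
      apply Finset.sum_subset (Finset.subset_univ _)
      intro j _ hjq
      rw [hXQ j (by simpa using hjq)]; ring
    calc ∑ i, X i * ∑ j, A i j * X j
        = ∑ i ∈ Qᶜ, X i * ∑ j, A i j * X j := by
          symm
          apply Finset.sum_subset (Finset.subset_univ _)
          intro i _ hiq
          rw [hXQ i (by simpa using hiq)]; ring
      _ = ∑ i : {k : Fin n // k ∈ Qᶜ}, X i.val * ∑ j, A i.val j * X j := by
          rw [Finset.sum_coe_sort Qᶜ (fun i => X i * ∑ j, A i j * X j)]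
      _ = ∑ i : {k : Fin n // k ∈ Qᶜ}, X i.val * ∑ j : {k : Fin n // k ∈ Qᶜ}, A i.val j.val * X j.val := by
          apply Finset.sum_congr rfl
          intro i _
          rw [inner]
  have hDq : X ⬝ᵥ (Matrix.diagonal g) *ᵥ X = x' ⬝ᵥ x' := by
    simp only [dotProduct, mulVec_diagonal, hx']
    calc ∑ i, X i * (g i * X i)
        = ∑ i ∈ Qᶜ, X i * (g i * X i) := by
          symm
          apply Finset.sum_subset (Finset.subset_univ _)
          intro i _ hiq
          rw [hXQ i (by simpa using hiq)]; ring
      _ = ∑ i ∈ Qᶜ, X i * X i := by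
          apply Finset.sum_congr rfl
          intro i hi
          have : g i = 1 := by simp [hg, Finset.mem_compl.mp hi]
          rw [this]; ring
      _ = ∑ i : {k : Fin n // k ∈ Qᶜ}, X i.val * X i.val := by
          rw [Finset.sum_coe_sort Qᶜ (fun i => X i * X i)]
  have hxx_pos : 0 < x' ⬝ᵥ x' := by
    have hne : ∃ i : {i : Fin n // i ∈ Qᶜ}, x' i ≠ 0 := by
      by_contra hz
      push_neg at hz
      have : ∀ i, X i = 0 := by
        intro i
        by_cases hi : i ∈ Q
        · exact hXQ i hi
        · exact hz ⟨i, Finset.mem_compl.mpr hi⟩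
      simp [this] at hsum
    obtain ⟨i, hi⟩ := hne
    calc (0:ℝ) < x' i ^ 2 := by positivity
      _ ≤ x' ⬝ᵥ x' := by
          rw [sq]
          exact Finset.single_le_sum (f := fun j => x' j * x' j)
            (fun j _ => mul_self_nonneg _) (Finset.mem_univ i)
  have hfX_neg : f X < 0 := by
    have hray := rayleigh_le B hherm x'
    have : f X = x' ⬝ᵥ B *ᵥ x' - μ * (x' ⬝ᵥ x') := by
      simp only [hf, hM, Matrix.sub_mulVec, dotProduct_sub, hAq, hDq,
        Matrix.smul_mulVec, dotProduct_smul, smul_eq_mul]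
    rw [this]
    have : x' ⬝ᵥ B *ᵥ x' ≤ (⨆ j, hherm.eigenvalues j) * (x' ⬝ᵥ x') := hray
    nlinarith
  -- step 2: move mass toward some j ∈ Q
  obtain ⟨j, hj⟩ := hQ
  set e : Fin n → ℝ := Pi.single j 1 with he
  have hMe : M *ᵥ e = A *ᵥ e := by
    simp only [hM, Matrix.sub_mulVec, Matrix.smul_mulVec]
    have : Matrix.diagonal g *ᵥ e = 0 := by
      funext i
      simp only [mulVec_diagonal, he]
      by_cases hij : i = j
      · subst hij; simp [hg, hj]
      · simp [Pi.single_eq_of_ne hij]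
    rw [this]
    simp
  have hcross1 : 0 ≤ X ⬝ᵥ M *ᵥ e := by
    rw [hMe]
    simp only [dotProduct, mulVec]
    apply Finset.sum_nonneg
    intro i _
    apply mul_nonneg (hnn i)
    apply Finset.sum_nonneg
    intro k _
    by_cases hkj : k = j
    · subst hkj; simp [he]; exact hApos i k
    · simp [he, Pi.single_eq_of_ne hkj]
  have hcross2 : 0 ≤ e ⬝ᵥ M *ᵥ X := by
    rw [single_dotProduct]
    simp only [one_mul, hM, Matrix.sub_mulVec, Matrix.smul_mulVec, Pi.sub_apply,
      Pi.smul_apply, mulVec_diagonal, smul_eq_mul]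
    have : g j = 0 := by simp [hg, hj]
    rw [this]
    simp only [mul_zero, zero_mul, sub_zero, mulVec, dotProduct]
    apply Finset.sum_nonneg
    intro k _
    exact mul_nonneg (hApos j k) (hnn k)
  have hdiag : 0 ≤ e ⬝ᵥ M *ᵥ e := by
    rw [hMe, single_dotProduct]
    simp only [one_mul, mulVec, dotProduct]
    apply Finset.sum_nonneg
    intro k _
    by_cases hkj : k = j
    · subst hkj; simp [he]; exact hApos k k
    · simp [he, Pi.single_eq_of_ne hkj]
  -- the path
  set c : ℝ → (Fin n → ℝ) := fun t => (1 - t) • X + t • e with hc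
  have hc0 : c 0 = X := by simp [hc]
  have hcmem : ∀ t ∈ Set.Ioc (0:ℝ) 1, c t ∈ s := by
    rintro t ⟨ht0, ht1⟩
    constructor
    · simp only [hc, Pi.add_apply, Pi.smul_apply, smul_eq_mul]
      rw [Finset.sum_add_distrib, ← Finset.mul_sum, ← Finset.mul_sum, hsum]
      have : ∑ i, e i = 1 := by simp [he, Finset.sum_pi_single]
      rw [this]; ring
    · intro i
      simp only [hc, Pi.add_apply, Pi.smul_apply, smul_eq_mul]
      have h1 : 0 ≤ (1 - t) * X i := mul_nonneg (by linarith) (hnn i)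
      have h2 : 0 ≤ t * e i := mul_nonneg (le_of_lt ht0) (by
        by_cases hij : i = j
        · subst hij; simp [he]
        · simp [he, Pi.single_eq_of_ne hij])
      linarith
  have hcont : Filter.Tendsto c (nhdsWithin 0 (Set.Ioc (0:ℝ) 1)) (nhdsWithin X s) := by
    apply tendsto_nhdsWithin_of_tendsto_nhds_of_eventually_within
    · have hcc : Continuous c := by
        simp only [hc]
        fun_prop
      have h0 := hcc.tendsto 0
      rw [hc0] at h0
      exact h0.mono_left nhdsWithin_le_nhds
    · exact Filter.eventually_of_mem self_mem_nhdsWithin hcmem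
  haveI hne : (nhdsWithin (0:ℝ) (Set.Ioc 0 1)).NeBot := by
    apply mem_closure_iff_nhdsWithin_neBot.mp
    rw [closure_Ioc (one_ne_zero).symm]
    exact Set.left_mem_Icc.mpr zero_le_one
  have hev : ∀ᶠ t in nhdsWithin (0:ℝ) (Set.Ioc 0 1), f (c t) ≤ f X := hcont.eventually hmax
  obtain ⟨t, htle, htmem⟩ := (hev.and (Filter.eventually_of_mem self_mem_nhdsWithin
    (fun t ht => ht))).exists
  obtain ⟨ht0, ht1⟩ := htmem
  -- expand f (c t)
  have hexp : f (c t) = (1-t)^2 * f X + (1-t)*t*(X ⬝ᵥ M *ᵥ e) + (1-t)*t*(e ⬝ᵥ M *ᵥ X)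
      + t^2 * (e ⬝ᵥ M *ᵥ e) := by
    simp only [hf, hc]
    rw [quad_expand]
  have hkey : f X < f (c t) := by
    rw [hexp]
    have h1 : 0 ≤ (1-t)*t*(X ⬝ᵥ M *ᵥ e) := mul_nonneg (mul_nonneg (by linarith) (le_of_lt ht0)) hcross1
    have h2 : 0 ≤ (1-t)*t*(e ⬝ᵥ M *ᵥ X) := mul_nonneg (mul_nonneg (by linarith) (le_of_lt ht0)) hcross2
    have h3 : 0 ≤ t^2 * (e ⬝ᵥ M *ᵥ e) := mul_nonneg (sq_nonneg _) hdiag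
    nlinarith [mul_pos (mul_pos ht0 (show (0:ℝ) < 2 - t by linarith)) (show (0:ℝ) < -f X by linarith), h1, h2, h3]
  linarith [htle, hkey]
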